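/- Suppose the classifier is consistent, i.e. L_{D_n} → L* in probability as n → ∞, and the test sample size m_n → ∞. Then the out-of-sample error L̂_{m_n} converges in probability to the Bayes error L*: for every ε > 0, P(|L̂_{m_n} − L*| > ε) ≤ 2 exp(−m_n ε²/2) + P(L_{D_n} − L* > ε/2) → 0. -/

import Mathlib

open MeasureTheory Filter
open scoped Topology ENNReal

/-- If the classifier is consistent (`L_{D_n} → L*` in probability) and the test size
`m_n → ∞`, then the out-of-sample error `L̂_{m_n}` converges in probability to the Bayes
error `L*`, with the explicit bound
`P(|L̂ − L*| > ε) ≤ 2 exp(−m_n ε²/2) + P(L_{D_n} − L* > ε/2) → 0`. -/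
theorem out_of_sample_error_consistent
    {Ω : Type*} [MeasurableSpace Ω] (μ : Measure Ω) [IsProbabilityMeasure μ]
    (m : ℕ → ℕ) (Lhat L : ℕ → Ω → ℝ) (Lstar : ℝ)
    (hm : Tendsto m atTop atTop)
    (hge : ∀ n ω, Lstar ≤ L n ω)
    (hcons : ∀ δ : ℝ, 0 < δ →
      Tendsto (fun n => μ {ω | |L n ω - Lstar| > δ}) atTop (𝓝 0))
    (hhoeff : ∀ n, ∀ δ : ℝ, 0 < δ →
      μ {ω | |Lhat n ω - L n ω| > δ}
        ≤ ENNReal.ofReal (2 * Real.exp (-2 * (m n : ℝ) * δ ^ 2))) :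
    ∀ ε : ℝ, 0 < ε →
      (∀ n, μ {ω | |Lhat n ω - Lstar| > ε}
          ≤ ENNReal.ofReal (2 * Real.exp (-(m n : ℝ) * ε ^ 2 / 2))
            + μ {ω | L n ω - Lstar > ε / 2}) ∧
      Tendsto (fun n => μ {ω | |Lhat n ω - Lstar| > ε}) atTop (𝓝 0) := by
  intro ε hε
  have hbound : ∀ n, μ {ω | |Lhat n ω - Lstar| > ε}
      ≤ ENNReal.ofReal (2 * Real.exp (-(m n : ℝ) * ε ^ 2 / 2))
        + μ {ω | L n ω - Lstar > ε / 2} := by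
    intro n
    have hsub : {ω | |Lhat n ω - Lstar| > ε}
        ⊆ {ω | |Lhat n ω - L n ω| > ε / 2} ∪ {ω | L n ω - Lstar > ε / 2} := by
      intro ω hω
      by_contra h
      rw [Set.mem_union] at h
      push_neg at h
      obtain ⟨h1, h2⟩ := h
      simp only [Set.mem_setOf_eq, not_lt] at h1 h2 hω
      have habs : |L n ω - Lstar| ≤ ε / 2 := by
        rw [abs_of_nonneg (by linarith [hge n ω])]; exact h2
      have := abs_sub_abs_le_abs_sub (Lhat n ω - Lstar) (L n ω - Lstar)
      have htri : |Lhat n ω - Lstar| ≤ |Lhat n ω - L n ω| + |L n ω - Lstar| := by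
        calc |Lhat n ω - Lstar| = |(Lhat n ω - L n ω) + (L n ω - Lstar)| := by ring_nf
          _ ≤ _ := abs_add_le _ _
      linarith
    calc μ {ω | |Lhat n ω - Lstar| > ε}
        ≤ μ ({ω | |Lhat n ω - L n ω| > ε / 2} ∪ {ω | L n ω - Lstar > ε / 2}) :=
          measure_mono hsub
      _ ≤ μ {ω | |Lhat n ω - L n ω| > ε / 2} + μ {ω | L n ω - Lstar > ε / 2} :=
          measure_union_le _ _
      _ ≤ ENNReal.ofReal (2 * Real.exp (-(m n : ℝ) * ε ^ 2 / 2))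
            + μ {ω | L n ω - Lstar > ε / 2} := by
          gcongr
          have := hhoeff n (ε / 2) (by linarith)
          refine this.trans_eq ?_
          congr 3
          ring
  refine ⟨hbound, ?_⟩
  have h1 : Tendsto (fun n => ENNReal.ofReal (2 * Real.exp (-(m n : ℝ) * ε ^ 2 / 2)))
      atTop (𝓝 0) := by
    have : Tendsto (fun n => 2 * Real.exp (-(m n : ℝ) * ε ^ 2 / 2)) atTop (𝓝 0) := by
      have hM : Tendsto (fun n => (m n : ℝ)) atTop atTop :=
        tendsto_natCast_atTop_atTop.comp hm
      have hexp : Tendsto (fun n => -(m n : ℝ) * ε ^ 2 / 2) atTop atBot := by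
        have heq : (fun n => -(m n : ℝ) * ε ^ 2 / 2)
            = fun n => -((m n : ℝ) * (ε ^ 2 / 2)) := by funext n; ring
        rw [heq]
        exact tendsto_neg_atTop_atBot.comp
          (hM.atTop_mul_const (show (0:ℝ) < ε ^ 2 / 2 by positivity))
      have := (Real.tendsto_exp_atBot.comp hexp).const_mul (2 : ℝ)
      simpa using this
    simpa using (ENNReal.tendsto_ofReal this)
  have h2 : Tendsto (fun n => μ {ω | L n ω - Lstar > ε / 2}) atTop (𝓝 0) := by
    have hc := hcons (ε / 2) (by linarith)
    refine tendsto_of_tendsto_of_tendsto_of_le_of_le tendsto_const_nhds hc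
      (fun n => zero_le) (fun n => measure_mono ?_)
    intro ω hω
    simp only [Set.mem_setOf_eq] at hω ⊢
    exact lt_of_lt_of_le hω (le_abs_self _)
  have hsum : Tendsto (fun n => ENNReal.ofReal (2 * Real.exp (-(m n : ℝ) * ε ^ 2 / 2))
      + μ {ω | L n ω - Lstar > ε / 2}) atTop (𝓝 0) := by
    simpa using h1.add h2
  exact tendsto_of_tendsto_of_tendsto_of_le_of_le tendsto_const_nhds hsum
    (fun n => zero_le) hbound
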